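/- For every ω > 0, every row vector β ∈ ℝ^n, and every A ∈ GL(n,ℝ) with ω^{-1}A ∈ O(h), there exists a unique triple (a,b,m) ∈ ℝ_{>0} × ℝ^n × O(h) such that Ω_{a,b,m}(0) = ω, the row vector of partial derivatives of Ω_{a,b,m} at 0 equals β, and the Jacobian matrix of φ_{a,b,m} at 0 equals A; namely (a,b,m) = (ω^{-1}, −ω^{-2}β, ω^{-1}A). -/

import Mathlib

open Matrix

noncomputable section

abbrev Idx (p q : ℕ) : Type := Unit ⊕ (Fin (p + q)) ⊕ Unit

/-- The diagonal quadratic form of signature `(p,q)` on `ℝ^n`, `n = p + q`. -/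
def hMat (p q : ℕ) : Matrix (Fin (p + q)) (Fin (p + q)) ℝ :=
  Matrix.diagonal fun i => if (i : ℕ) < p then (1 : ℝ) else -1

/-- The quadratic form of signature `(p+1,q+1)` on `ℝ^{n+2}`, in block form
`[[0,0,1],[0,h,0],[1,0,0]]`. -/
def htMat (p q : ℕ) : Matrix (Idx p q) (Idx p q) ℝ :=
  Matrix.of fun I J =>
    match I, J with
    | Sum.inl _, Sum.inr (Sum.inr _) => (1 : ℝ)
    | Sum.inr (Sum.inr _), Sum.inl _ => 1
    | Sum.inr (Sum.inl i), Sum.inr (Sum.inl j) => hMat p q i j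
    | _, _ => 0

/-- The first standard basis vector `e₀` of `ℝ^{n+2}`. -/
def e0 (p q : ℕ) : Idx p q → ℝ := fun I =>
  match I with
  | Sum.inl _ => 1
  | _ => 0

/-- `c = -(2a)⁻¹ b h⁻¹ bᵀ`. -/
def cVal (p q : ℕ) (a : ℝ) (b : Fin (p + q) → ℝ) : ℝ :=
  -(2 * a)⁻¹ * (b ⬝ᵥ ((hMat p q)⁻¹ *ᵥ b))

/-- `d = -a⁻¹ m h⁻¹ bᵀ`. -/
def dVec (p q : ℕ) (a : ℝ) (b : Fin (p + q) → ℝ)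
    (m : Matrix (Fin (p + q)) (Fin (p + q)) ℝ) : Fin (p + q) → ℝ :=
  (-a⁻¹) • (m *ᵥ ((hMat p q)⁻¹ *ᵥ b))

/-- The element `p(a,b,m)` of the parabolic subgroup, in block form
`[[a,b,c],[0,m,d],[0,0,a⁻¹]]`. -/
def pMat (p q : ℕ) (a : ℝ) (b : Fin (p + q) → ℝ)
    (m : Matrix (Fin (p + q)) (Fin (p + q)) ℝ) : Matrix (Idx p q) (Idx p q) ℝ :=
  Matrix.of fun I J =>
    match I, J with
    | Sum.inl _, Sum.inl _ => a
    | Sum.inl _, Sum.inr (Sum.inl j) => b j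
    | Sum.inl _, Sum.inr (Sum.inr _) => cVal p q a b
    | Sum.inr (Sum.inl i), Sum.inr (Sum.inl j) => m i j
    | Sum.inr (Sum.inl i), Sum.inr (Sum.inr _) => dVec p q a b m i
    | Sum.inr (Sum.inr _), Sum.inr (Sum.inr _) => a⁻¹
    | _, _ => 0

/-- `|x|² = xᵀ h x`. -/
def normSq (p q : ℕ) (x : Fin (p + q) → ℝ) : ℝ := x ⬝ᵥ (hMat p q *ᵥ x)

/-- The denominator `D(x) = a + b x - ½ c |x|²`. -/
def Dden (p q : ℕ) (a : ℝ) (b x : Fin (p + q) → ℝ) : ℝ :=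
  a + b ⬝ᵥ x - (1 / 2) * cVal p q a b * normSq p q x

/-- The conformal transformation `φ(x) = (m x - ½|x|² d)/D(x)`. -/
def phiMap (p q : ℕ) (a : ℝ) (b : Fin (p + q) → ℝ)
    (m : Matrix (Fin (p + q)) (Fin (p + q)) ℝ) (x : Fin (p + q) → ℝ) :
    Fin (p + q) → ℝ :=
  (Dden p q a b x)⁻¹ • (m *ᵥ x - ((1 / 2) * normSq p q x) • dVec p q a b m)

/-- The conformal factor `Ω(x) = D(x)⁻¹`. -/
def OmegaFn (p q : ℕ) (a : ℝ) (b : Fin (p + q) → ℝ) (x : Fin (p + q) → ℝ) : ℝ :=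
  (Dden p q a b x)⁻¹

/-- Jacobian matrix of a map at a point: `J i j = ∂ⱼ φⁱ (x)`. -/
def jacobianAt (p q : ℕ) (φ : (Fin (p + q) → ℝ) → (Fin (p + q) → ℝ))
    (x : Fin (p + q) → ℝ) : Matrix (Fin (p + q)) (Fin (p + q)) ℝ :=
  Matrix.of fun i j => fderiv ℝ φ x (Pi.single j 1) i

/-- Row vector of partial derivatives of a scalar function at a point. -/
def gradAt (p q : ℕ) (f : (Fin (p + q) → ℝ) → ℝ) (x : Fin (p + q) → ℝ) :
    Fin (p + q) → ℝ :=
  fun j => fderiv ℝ f x (Pi.single j 1)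

-- aux
variable {p q : ℕ}

noncomputable def dotCLM (b : Fin (p+q) → ℝ) : (Fin (p+q) → ℝ) →L[ℝ] ℝ :=
  LinearMap.toContinuousLinearMap
    { toFun := fun v => b ⬝ᵥ v
      map_add' := fun x y => dotProduct_add b x y
      map_smul' := fun c x => by simp }

lemma dotCLM_apply (b v : Fin (p+q) → ℝ) : dotCLM b v = b ⬝ᵥ v := rfl

noncomputable def mulVecCLM (m : Matrix (Fin (p+q)) (Fin (p+q)) ℝ) :
    (Fin (p+q) → ℝ) →L[ℝ] (Fin (p+q) → ℝ) :=
  LinearMap.toContinuousLinearMap m.mulVecLin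

lemma mulVecCLM_apply (m : Matrix (Fin (p+q)) (Fin (p+q)) ℝ) (v : Fin (p+q) → ℝ) :
    mulVecCLM m v = m *ᵥ v := rfl

lemma hasFDerivAt_normSq :
    HasFDerivAt (normSq p q) (0 : (Fin (p+q) → ℝ) →L[ℝ] ℝ) 0 := by
  have h1 : ∀ i : Fin (p+q), HasFDerivAt (fun x : Fin (p+q) → ℝ => x i * (hMat p q *ᵥ x) i)
      (0 : (Fin (p+q) → ℝ) →L[ℝ] ℝ) 0 := by
    intro i
    have hp : HasFDerivAt (fun x : Fin (p+q) → ℝ => x i)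
        (ContinuousLinearMap.proj i : (Fin (p+q) → ℝ) →L[ℝ] ℝ) 0 := by
      exact (ContinuousLinearMap.proj i : (Fin (p+q) → ℝ) →L[ℝ] ℝ).hasFDerivAt
    have hm : HasFDerivAt (fun x : Fin (p+q) → ℝ => (hMat p q *ᵥ x) i)
        (((ContinuousLinearMap.proj i : (Fin (p+q) → ℝ) →L[ℝ] ℝ)).comp
          (mulVecCLM (hMat p q))) 0 := by
      exact (((ContinuousLinearMap.proj i : (Fin (p+q) → ℝ) →L[ℝ] ℝ)).comp
        (mulVecCLM (hMat p q))).hasFDerivAt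
    have := hp.fun_mul hm
    simpa [mulVec_zero] using this
  have hs := HasFDerivAt.fun_sum (fun i (_ : i ∈ Finset.univ) => h1 i)
  have heq : normSq p q = fun x => ∑ i, x i * (hMat p q *ᵥ x) i := by
    funext x; simp [normSq, dotProduct]
  rw [heq]
  simpa using hs

lemma Dden_zero (a : ℝ) (b : Fin (p+q) → ℝ) : Dden p q a b 0 = a := by
  simp [Dden, normSq]

lemma hasFDerivAt_Dden (a : ℝ) (b : Fin (p+q) → ℝ) :
    HasFDerivAt (Dden p q a b) (dotCLM b) 0 := by
  have h1 : HasFDerivAt (fun x : Fin (p+q) → ℝ => b ⬝ᵥ x) (dotCLM b) 0 :=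
    (dotCLM b).hasFDerivAt
  have h2 := (hasFDerivAt_normSq (p := p) (q := q)).const_mul ((1/2) * cVal p q a b)
  have := (h1.const_add a).fun_sub h2
  have heq : Dden p q a b = fun x => a + b ⬝ᵥ x - (1/2) * cVal p q a b * normSq p q x := rfl
  rw [heq]
  simpa using this

lemma hasFDerivAt_Omega (a : ℝ) (ha : a ≠ 0) (b : Fin (p+q) → ℝ) :
    HasFDerivAt (OmegaFn p q a b)
      ((ContinuousLinearMap.smulRight (1 : ℝ →L[ℝ] ℝ) (-(a^2)⁻¹)).comp (dotCLM b)) 0 := by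
  have hD := hasFDerivAt_Dden (p := p) (q := q) a b
  have hinv : HasFDerivAt (fun x : ℝ => x⁻¹)
      (ContinuousLinearMap.smulRight (1 : ℝ →L[ℝ] ℝ) (-(a^2)⁻¹)) (Dden p q a b 0) := by
    rw [Dden_zero]; exact hasFDerivAt_inv ha
  exact hinv.comp 0 hD

lemma grad_Omega (a : ℝ) (ha : a ≠ 0) (b : Fin (p+q) → ℝ) :
    gradAt p q (OmegaFn p q a b) 0 = fun j => -(a^2)⁻¹ * b j := by
  funext j
  have h := (hasFDerivAt_Omega a ha b).fderiv
  simp only [gradAt, h]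
  simp [dotCLM_apply, dotProduct_single]
  ring

lemma hasFDerivAt_phi (a : ℝ) (ha : a ≠ 0) (b : Fin (p+q) → ℝ)
    (m : Matrix (Fin (p+q)) (Fin (p+q)) ℝ) :
    HasFDerivAt (phiMap p q a b m) (a⁻¹ • mulVecCLM m) 0 := by
  have hf := hasFDerivAt_Omega a ha b
  have h1 : HasFDerivAt (fun x : Fin (p+q) → ℝ => m *ᵥ x) (mulVecCLM m) 0 := by
    exact (mulVecCLM m).hasFDerivAt
  have h2 : HasFDerivAt (fun x : Fin (p+q) → ℝ => ((1/2) * normSq p q x) • dVec p q a b m)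
      (0 : (Fin (p+q) → ℝ) →L[ℝ] (Fin (p+q) → ℝ)) 0 := by
    have := ((hasFDerivAt_normSq (p := p) (q := q)).const_mul (1/2 : ℝ)).smul_const
      (dVec p q a b m)
    have hz : (((1/2 : ℝ) • (0 : (Fin (p+q) → ℝ) →L[ℝ] ℝ)).smulRight (dVec p q a b m))
        = 0 := by
      ext v i; simp
    rw [hz] at this
    exact this
  have hg := h1.sub h2
  have := hf.smul hg
  have heq : phiMap p q a b m =
      fun x => OmegaFn p q a b x • (m *ᵥ x - ((1/2) * normSq p q x) • dVec p q a b m) := rfl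
  rw [heq]
  have hO0 : OmegaFn p q a b 0 = a⁻¹ := by
    simp [OmegaFn, Dden_zero]
  have hz : ∀ L : (Fin (p+q) → ℝ) →L[ℝ] ℝ, L.smulRight (0 : Fin (p+q) → ℝ) = 0 := by
    intro L; ext v i; simp
  simpa [hO0, mulVec_zero, normSq, hz] using this

lemma jac_phi (a : ℝ) (ha : a ≠ 0) (b : Fin (p+q) → ℝ)
    (m : Matrix (Fin (p+q)) (Fin (p+q)) ℝ) :
    jacobianAt p q (phiMap p q a b m) 0 = a⁻¹ • m := by
  have h := (hasFDerivAt_phi a ha b m).fderiv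
  ext i j
  simp [jacobianAt, h, mulVecCLM_apply]

lemma Omega_zero (a : ℝ) (b : Fin (p+q) → ℝ) : OmegaFn p q a b 0 = a⁻¹ := by
  simp [OmegaFn, Dden_zero]

end



/-- Given `ω > 0`, a row vector `β`, and `A` with `ω⁻¹ A ∈ O(h)`, there is a
unique `(a,b,m) ∈ ℝ₊ × ℝⁿ × O(h)` with `Ω(0) = ω`, `Ω'(0) = β`, `φ'(0) = A`;
namely `(a,b,m) = (ω⁻¹, -ω⁻² β, ω⁻¹ A)`. -/
theorem statement6 (p q : ℕ) (hn : 3 ≤ p + q)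
    (ω : ℝ) (hω : 0 < ω) (β : Fin (p + q) → ℝ)
    (A : Matrix (Fin (p + q)) (Fin (p + q)) ℝ)
    (hA : (ω⁻¹ • A)ᵀ * hMat p q * (ω⁻¹ • A) = hMat p q) :
    ((0 < ω⁻¹ ∧ (ω⁻¹ • A)ᵀ * hMat p q * (ω⁻¹ • A) = hMat p q) ∧
      OmegaFn p q ω⁻¹ ((-(ω ^ 2)⁻¹) • β) 0 = ω ∧
      gradAt p q (OmegaFn p q ω⁻¹ ((-(ω ^ 2)⁻¹) • β)) 0 = β ∧
      jacobianAt p q (phiMap p q ω⁻¹ ((-(ω ^ 2)⁻¹) • β) (ω⁻¹ • A)) 0 = A) ∧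
    ∀ (a : ℝ) (b : Fin (p + q) → ℝ)
      (m : Matrix (Fin (p + q)) (Fin (p + q)) ℝ),
      0 < a → mᵀ * hMat p q * m = hMat p q →
      OmegaFn p q a b 0 = ω →
      gradAt p q (OmegaFn p q a b) 0 = β →
      jacobianAt p q (phiMap p q a b m) 0 = A →
      a = ω⁻¹ ∧ b = (-(ω ^ 2)⁻¹) • β ∧ m = ω⁻¹ • A := by
  have hω0 : ω ≠ 0 := hω.ne'
  have hωi : (ω⁻¹ : ℝ) ≠ 0 := inv_ne_zero hω0
  constructor
  · refine ⟨⟨inv_pos.mpr hω, hA⟩, ?_, ?_, ?_⟩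
    · rw [Omega_zero, inv_inv]
    · rw [grad_Omega _ hωi]
      funext j
      simp only [Pi.smul_apply, smul_eq_mul, inv_inv]
      field_simp
    · rw [jac_phi _ hωi, inv_inv, smul_smul]
      simp [hω0]
  · intro a b m hapos hm hO hgrad hjac
    have ha : a ≠ 0 := hapos.ne'
    have haω : a = ω⁻¹ := by
      rw [Omega_zero] at hO
      rw [← hO, inv_inv]
    subst haω
    refine ⟨rfl, ?_, ?_⟩
    · rw [grad_Omega _ hωi] at hgrad
      funext j
      have h := congrFun hgrad j
      simp only [Pi.smul_apply, smul_eq_mul]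
      rw [← h]
      field_simp
    · rw [jac_phi _ hωi, inv_inv] at hjac
      rw [← hjac, smul_smul]
      simp [hω0]
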